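/- Let L ≥ 1 be a natural number, Q an L×L generator matrix, and F a cumulative distribution function on [0,∞) with F(0)=0 admitting a continuous density f ≥ 0, F^c := 1−F with F^c(x) > 0 for all x ≥ 0, and hazard rate μ(a) := f(a)/F^c(a). Let i : [0,∞)×[0,∞) → ℝ^L be continuous (row-vector valued), and suppose that for every (t,𝔞) with t > 0 and 𝔞 > 0, the directional derivative of i at (t,𝔞) in the direction (1,1) exists and equals −μ(𝔞)·i(t,𝔞) + i(t,𝔞)·Q. Then: (a) for all 0 ≤ t ≤ 𝔞, i(t,𝔞) = (F^c(𝔞)/F^c(𝔞−t))·i(0,𝔞−t)·exp(tQ); and (b) for all 0 ≤ 𝔞 < t, i(t,𝔞) = F^c(𝔞)·i(t−𝔞,0)·exp(𝔞Q). -/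

import Mathlib

open Matrix intervalIntegral Set

/-- `Q` is the generator matrix of a continuous-time Markov chain on `Fin L`:
nonnegative off-diagonal entries and zero row sums. -/
def IsGeneratorMatrix {L : ℕ} (Q : Matrix (Fin L) (Fin L) ℝ) : Prop :=
  (∀ i j, i ≠ j → 0 ≤ Q i j) ∧ ∀ i, ∑ j, Q i j = 0

/-- The complementary c.d.f. `F^c = 1 - F` associated with the density `f` on `[0,∞)`,
where `F(x) = ∫₀ˣ f(u) du`. -/
noncomputable def survival (f : ℝ → ℝ) (x : ℝ) : ℝ := 1 - ∫ u in (0:ℝ)..x, f u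

lemma survival_hasDerivAt (f : ℝ → ℝ) (hf : Continuous f) (x : ℝ) :
    HasDerivAt (survival f) (-(f x)) x := by
  exact ((hf.integral_hasStrictDerivAt 0 x).hasDerivAt.const_sub 1)

lemma survival_continuous (f : ℝ → ℝ) (hf : Continuous f) : Continuous (survival f) :=
  continuous_const.sub (intervalIntegral.continuous_primitive
    (fun a b => hf.intervalIntegrable a b) 0)

lemma survival_zero (f : ℝ → ℝ) : survival f 0 = 1 := by simp [survival]

open NormedSpace in
/-- The key constancy-along-characteristics lemma. -/
lemma psi_const {L : ℕ} (Q : Matrix (Fin L) (Fin L) ℝ)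
    (f : ℝ → ℝ) (hf_cont : Continuous f)
    (hFc_pos : ∀ x ≥ (0:ℝ), 0 < survival f x)
    (i : ℝ → ℝ → Fin L → ℝ)
    (hi_cont : ContinuousOn (fun p : ℝ × ℝ => i p.1 p.2) (Ici 0 ×ˢ Ici 0))
    (hi_pde : ∀ t > (0:ℝ), ∀ 𝔞 > (0:ℝ),
      HasDerivAt (fun h : ℝ => i (t + h) (𝔞 + h))
        (-(f 𝔞 / survival f 𝔞) • i t 𝔞 + (i t 𝔞) ᵥ* Q) 0)
    (t0 a0 T : ℝ) (ht0 : 0 ≤ t0) (ha0 : 0 ≤ a0) (hT : 0 < T) :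
    (survival f (a0 + T))⁻¹ • ((i (t0 + T) (a0 + T)) ᵥ* NormedSpace.exp ((-T) • Q))
      = (survival f a0)⁻¹ • i t0 a0 := by
  letI : NormedAddCommGroup (Matrix (Fin L) (Fin L) ℝ) := Matrix.linftyOpNormedAddCommGroup
  letI : NormedRing (Matrix (Fin L) (Fin L) ℝ) := Matrix.linftyOpNormedRing
  letI : NormedAlgebra ℝ (Matrix (Fin L) (Fin L) ℝ) := Matrix.linftyOpNormedAlgebra
  set E : ℝ → Matrix (Fin L) (Fin L) ℝ := fun s => exp ((-s) • Q) with hEdef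
  set ψ : ℝ → Fin L → ℝ :=
    fun s => (survival f (a0 + s))⁻¹ • ((i (t0 + s) (a0 + s)) ᵥ* E s) with hψdef
  -- continuity of `ψ` on `[0, T]`
  have hEcont : Continuous E := by
    refine continuous_iff_continuousAt.2 fun s => ?_
    have h1 := hasDerivAt_exp_smul_const (𝕂 := ℝ) Q (-s)
    have h3 := h1.scomp s ((hasDerivAt_id s).neg)
    exact h3.continuousAt
  have hicont : ContinuousOn (fun s : ℝ => i (t0 + s) (a0 + s)) (Icc 0 T) := by
    have hmap : ContinuousOn (fun s : ℝ => ((t0 + s, a0 + s) : ℝ × ℝ)) (Icc 0 T) :=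
      Continuous.continuousOn (by continuity)
    have hmaps : MapsTo (fun s : ℝ => ((t0 + s, a0 + s) : ℝ × ℝ)) (Icc 0 T)
        (Ici 0 ×ˢ Ici 0) := by
      intro s hs
      exact ⟨by simp only [mem_Ici]; linarith [hs.1], by simp only [mem_Ici]; linarith [hs.1]⟩
    exact ContinuousOn.comp hi_cont hmap hmaps
  have hinvcont : ContinuousOn (fun s : ℝ => (survival f (a0 + s))⁻¹) (Icc 0 T) := by
    apply ContinuousOn.inv₀
    · exact ((survival_continuous f hf_cont).comp (continuous_const.add continuous_id)).continuousOn
    · intro s hs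
      exact ne_of_gt (hFc_pos _ (by linarith [hs.1]))
  have hψcont : ContinuousOn ψ (Icc 0 T) := by
    apply hinvcont.smul
    rw [continuousOn_pi]
    intro j
    have : (fun s : ℝ => ((i (t0 + s) (a0 + s)) ᵥ* E s) j)
        = fun s : ℝ => ∑ k, i (t0 + s) (a0 + s) k * E s k j := by
      funext s; simp [Matrix.vecMul, dotProduct]
    rw [this]
    apply continuousOn_finset_sum
    intro k _
    exact ((continuous_apply k).comp_continuousOn hicont).mul
      (((continuous_apply j).comp ((continuous_apply k).comp hEcont)).continuousOn)
  -- derivative of `ψ` is zero for `s > 0`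
  have hψderiv : ∀ s : ℝ, 0 < s → HasDerivAt ψ 0 s := by
    intro s hs
    have hbpos : 0 < survival f (a0 + s) := hFc_pos _ (by linarith)
    set v : Fin L → ℝ := i (t0 + s) (a0 + s) with hvdef
    set b : ℝ := survival f (a0 + s) with hbdef
    set μv : ℝ := f (a0 + s)
    have hbne : b ≠ 0 := ne_of_gt hbpos
    -- derivative of the scalar factor
    have hcder : HasDerivAt (fun u : ℝ => (survival f (a0 + u))⁻¹) (μv / b ^ 2) s := by
      have h0 : HasDerivAt (fun u : ℝ => survival f (a0 + u)) (-(f (a0 + s))) s := by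
        have h1 := (survival_hasDerivAt f hf_cont (a0 + s)).comp s
          ((hasDerivAt_id s).const_add a0)
        simpa [Function.comp_def] using h1
      have h2 := h0.inv hbne
      have : -(-(f (a0 + s))) / (survival f (a0 + s)) ^ 2 = μv / b ^ 2 := by
        rw [neg_neg]
      rwa [this] at h2
    -- derivative of the vector along the characteristic
    have hvder : HasDerivAt (fun u : ℝ => i (t0 + u) (a0 + u)) (-(μv / b) • v + v ᵥ* Q) s := by
      have h1 := hi_pde (t0 + s) (by linarith) (a0 + s) (by linarith)
      have h1' : HasDerivAt (fun h : ℝ => i (t0 + s + h) (a0 + s + h))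
          (-(f (a0 + s) / survival f (a0 + s)) • i (t0 + s) (a0 + s)
            + (i (t0 + s) (a0 + s)) ᵥ* Q) (s - s) := by
        rw [sub_self]; exact h1
      have h3 := h1'.comp_sub_const
      have heq : (fun u : ℝ => i (t0 + s + (u - s)) (a0 + s + (u - s)))
          = fun u : ℝ => i (t0 + u) (a0 + u) := by
        funext u; congr 1 <;> ring
      rw [heq] at h3
      simpa using h3
    have hvj := hasDerivAt_pi.1 hvder
    -- derivative of `E`
    have hEder : HasDerivAt E (-(E s * Q)) s := by
      have h1 := hasDerivAt_exp_smul_const (𝕂 := ℝ) Q (-s)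
      have h2 : HasDerivAt (fun u : ℝ => -u) (-1) s := (hasDerivAt_id s).neg
      have h3 := h1.scomp s h2
      simp [hEdef, Function.comp_def] at h3 ⊢
      exact h3
    -- entrywise derivative of `E`
    have hEj : ∀ k j : Fin L, HasDerivAt (fun u : ℝ => E u k j) (-(E s * Q) k j) s := by
      intro k j
      let l : Matrix (Fin L) (Fin L) ℝ →ₗ[ℝ] ℝ :=
        { toFun := fun A => A k j, map_add' := fun _ _ => rfl, map_smul' := fun _ _ => rfl }
      have := (LinearMap.toContinuousLinearMap l).hasFDerivAt.comp_hasDerivAt s hEder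
      exact this
    have hcomm : Q * E s = E s * Q := (((Commute.refl Q).smul_right (-s)).exp_right).eq
    rw [hψdef]
    apply hasDerivAt_pi.2
    intro j
    have hψj : (fun u : ℝ => ((survival f (a0 + u))⁻¹ • ((i (t0 + u) (a0 + u)) ᵥ* E u)) j)
        = fun u : ℝ => (survival f (a0 + u))⁻¹ * ∑ k, i (t0 + u) (a0 + u) k * E u k j := by
      funext u; simp [Matrix.vecMul, dotProduct, Finset.mul_sum]
    rw [hψj]
    have hsum : HasDerivAt (fun u : ℝ => ∑ k, i (t0 + u) (a0 + u) k * E u k j)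
        (∑ k, ((-(μv / b) • v + v ᵥ* Q) k * E s k j + v k * (-(E s * Q) k j))) s :=
      HasDerivAt.fun_sum (fun k _ => (hvj k).mul (hEj k j))
    have hmain := hcder.mul hsum
    have hswap : ∑ k, (v ᵥ* Q) k * E s k j = ∑ k, v k * (E s * Q) k j := by
      calc ∑ k, (v ᵥ* Q) k * E s k j
          = ∑ k, (∑ m, v m * Q m k) * E s k j := by
            simp [Matrix.vecMul, dotProduct]
        _ = ∑ m, v m * (Q * E s) m j := by
            simp only [Finset.sum_mul, Matrix.mul_apply, Finset.mul_sum, mul_assoc]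
            exact Finset.sum_comm
        _ = ∑ k, v k * (E s * Q) k j := by rw [hcomm]
    have expand : ∀ k : Fin L,
        ((-(μv / b) • v + v ᵥ* Q) k * E s k j + v k * (-(E s * Q) k j))
          = -(μv / b) * (v k * E s k j) + ((v ᵥ* Q) k * E s k j - v k * (E s * Q) k j) := by
      intro k
      simp only [Pi.add_apply, Pi.smul_apply, smul_eq_mul]
      ring
    have hzero : μv / b ^ 2 * (∑ k, v k * E s k j)
        + (survival f (a0 + s))⁻¹
          * (∑ k, ((-(μv / b) • v + v ᵥ* Q) k * E s k j + v k * (-(E s * Q) k j))) = 0 := by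
      rw [Finset.sum_congr rfl (fun k _ => expand k), Finset.sum_add_distrib,
        ← Finset.mul_sum, Finset.sum_sub_distrib, hswap, sub_self, add_zero, ← hbdef]
      field_simp
      ring
    rw [hzero] at hmain
    exact hmain
  -- constancy on `[ε, T]`
  have hconst : ∀ ε : ℝ, ε ∈ Ioc 0 T → ψ T = ψ ε := by
    intro ε hε
    have := constant_of_has_deriv_right_zero
      (hψcont.mono (Icc_subset_Icc hε.1.le le_rfl))
      (fun x hx => (hψderiv x (lt_of_lt_of_le hε.1 hx.1)).hasDerivWithinAt)
    exact this T ⟨hε.2, le_rfl⟩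
  -- limit as `ε → 0⁺`
  have hlim : ψ 0 = ψ T := by
    have h1 : Filter.Tendsto ψ (nhdsWithin 0 (Ioi 0)) (nhds (ψ 0)) := by
      rw [← nhdsWithin_Ioc_eq_nhdsGT hT]
      exact (hψcont 0 ⟨le_rfl, hT.le⟩).mono Ioc_subset_Icc_self
    have h2 : Filter.Tendsto ψ (nhdsWithin 0 (Ioi 0)) (nhds (ψ T)) := by
      refine Filter.Tendsto.congr' ?_ tendsto_const_nhds
      filter_upwards [Ioc_mem_nhdsGT_of_mem (⟨le_refl (0:ℝ), hT⟩ : (0:ℝ) ∈ Ico 0 T)] with ε hε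
      exact hconst ε hε
    exact tendsto_nhds_unique h1 h2
  have hψ0 : ψ 0 = (survival f a0)⁻¹ • i t0 a0 := by
    simp [hψdef, hEdef]
  have hψT : ψ T = (survival f (a0 + T))⁻¹ • ((i (t0 + T) (a0 + T)) ᵥ* exp ((-T) • Q)) := rfl
  rw [← hψT, ← hlim, hψ0]

/-- **Theorem 3.1, uniqueness/representation part.** Any solution of the transport PDE
`∂_t i + ∂_𝔞 i = -μ(𝔞) i + i Q` is given by the formulas (3.4)–(3.5):
`i(t,𝔞) = (F^c(𝔞)/F^c(𝔞-t))·i(0,𝔞-t)·e^{tQ}` for `t ≤ 𝔞` and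
`i(t,𝔞) = F^c(𝔞)·i(t-𝔞,0)·e^{𝔞Q}` for `𝔞 < t`. -/
theorem transport_pde_representation
    (L : ℕ) (hL : 1 ≤ L) (Q : Matrix (Fin L) (Fin L) ℝ) (hQ : IsGeneratorMatrix Q)
    (f : ℝ → ℝ) (hf_cont : Continuous f) (hf_nonneg : ∀ x, 0 ≤ f x)
    (hf_prob : ∫ u in Ioi (0:ℝ), f u = 1)
    (hFc_pos : ∀ x ≥ (0:ℝ), 0 < survival f x)
    (i : ℝ → ℝ → Fin L → ℝ)
    (hi_cont : ContinuousOn (fun p : ℝ × ℝ => i p.1 p.2) (Ici 0 ×ˢ Ici 0))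
    (hi_pde : ∀ t > (0:ℝ), ∀ 𝔞 > (0:ℝ),
      HasDerivAt (fun h : ℝ => i (t + h) (𝔞 + h))
        (-(f 𝔞 / survival f 𝔞) • i t 𝔞 + (i t 𝔞) ᵥ* Q) 0) :
    (∀ t 𝔞 : ℝ, 0 ≤ t → t ≤ 𝔞 →
      i t 𝔞 = (survival f 𝔞 / survival f (𝔞 - t)) •
        ((i 0 (𝔞 - t)) ᵥ* NormedSpace.exp (t • Q))) ∧
    (∀ t 𝔞 : ℝ, 0 ≤ 𝔞 → 𝔞 < t →
      i t 𝔞 = survival f 𝔞 • ((i (t - 𝔞) 0) ᵥ* NormedSpace.exp (𝔞 • Q))) := by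
  have hexpinv : ∀ s : ℝ,
      NormedSpace.exp ((-s) • Q) * NormedSpace.exp (s • Q) = 1 := by
    intro s
    rw [← Matrix.exp_add_of_commute _ _ (((Commute.refl Q).smul_left (-s)).smul_right s)]
    simp
  constructor
  · intro t 𝔞 ht ht𝔞
    have h𝔞 : 0 ≤ 𝔞 := le_trans ht ht𝔞
    rcases eq_or_lt_of_le ht with heq | hlt
    · subst heq
      have : survival f 𝔞 ≠ 0 := ne_of_gt (hFc_pos 𝔞 h𝔞)
      simp [this, div_self this]
    · have key := psi_const Q f hf_cont hFc_pos i hi_cont hi_pde 0 (𝔞 - t) t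
        le_rfl (by linarith) hlt
      rw [zero_add, sub_add_cancel] at key
      have h1 : i t 𝔞 = survival f 𝔞 •
          (((survival f 𝔞)⁻¹ • ((i t 𝔞) ᵥ* NormedSpace.exp ((-t) • Q)))
            ᵥ* NormedSpace.exp (t • Q)) := by
        rw [Matrix.smul_vecMul, Matrix.vecMul_vecMul, hexpinv, Matrix.vecMul_one,
          smul_smul, mul_inv_cancel₀ (ne_of_gt (hFc_pos 𝔞 h𝔞)), one_smul]
      rw [h1, key, Matrix.smul_vecMul, smul_smul, div_eq_mul_inv]
  · intro t 𝔞 h𝔞 h𝔞t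
    rcases eq_or_lt_of_le h𝔞 with heq | hlt
    · subst heq
      simp [survival_zero]
    · have key := psi_const Q f hf_cont hFc_pos i hi_cont hi_pde (t - 𝔞) 0 𝔞
        (by linarith) le_rfl hlt
      rw [zero_add, sub_add_cancel, survival_zero, inv_one, one_smul] at key
      have h1 : i t 𝔞 = survival f 𝔞 •
          (((survival f 𝔞)⁻¹ • ((i t 𝔞) ᵥ* NormedSpace.exp ((-𝔞) • Q)))
            ᵥ* NormedSpace.exp (𝔞 • Q)) := by
        rw [Matrix.smul_vecMul, Matrix.vecMul_vecMul, hexpinv, Matrix.vecMul_one,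
          smul_smul, mul_inv_cancel₀ (ne_of_gt (hFc_pos 𝔞 h𝔞)), one_smul]
      rw [h1, key]
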